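/- Let m ≥ 5 and consider any sequence S of m terms each equal to 1 or −1. Define f(S) = ∏_{i=1}^p (2Δ·h_i) where S = 1^{k_1}(−1)^{h_1}1^{k_2}(−1)^{h_2}...(−1)^{h_p}1^{k_{p+1}} is the maximal-block decomposition (with f(1^m) = 1), and a_m = Σ_{S ∈ {−1,1}^m} f(S). Then a_m = a_{m-1} + 2Δ·Σ_{j=1}^{m-2} j·a_{m-1-j} + 2Δ(m−1) + 2Δm, where Δ > 0 is a fixed real. -/

import Mathlib

/-- `f Δ S`: decompose the `±1`-sequence `S` (encoded over `Bool`, with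
`false` standing for `−1` and `true` for `1`) into maximal constant blocks,
and take the product of `2Δ·h` over all blocks of `−1`'s of length `h`
(empty product `1`). -/
def blockWeight (Δ : ℝ) (S : List Bool) : ℝ :=
  ((S.splitBy (· == ·)).map
    (fun g => if g.head? = some false then 2 * Δ * g.length else 1)).prod

/-- State-machine version of the block weight: `bw2 Δ ag n l` is the weight of
a list whose current (still open) block has value `ag` and length `n`, with
remaining elements `l`. -/
noncomputable def bw2 (Δ : ℝ) : Bool → ℕ → List Bool → ℝ
  | false, n, [] => 2 * Δ * n
  | true, _, [] => 1
  | false, n, false :: l => bw2 Δ false (n + 1) l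
  | false, n, true :: l => (2 * Δ * n) * bw2 Δ true 1 l
  | true, n, true :: l => bw2 Δ true (n + 1) l
  | true, _, false :: l => bw2 Δ false 1 l

lemma head?_reverse_cons (ag : Bool) (g : List Bool) (hg : ∀ x ∈ g, x = ag) :
    ((ag :: g).reverse).head? = some ag := by
  rw [List.reverse_cons]
  rcases h : g.reverse with _ | ⟨x, t⟩
  · simp [h]
  · have hx : x ∈ g := by rw [← List.mem_reverse, h]; exact List.mem_cons_self
    simp [h, hg x hx]

lemma loop_spec (Δ : ℝ) (l : List Bool) : ∀ (ag : Bool) (g : List Bool)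
    (gs : List (List Bool)), (∀ x ∈ g, x = ag) →
    ((List.splitBy.loop (· == ·) l ag g gs).map
      (fun g => if g.head? = some false then 2 * Δ * g.length else 1)).prod
      = ((gs.map
          (fun g => if g.head? = some false then 2 * Δ * g.length else 1)).prod)
        * bw2 Δ ag (g.length + 1) l := by
  induction l with
  | nil =>
    intro ag g gs hg
    rw [List.splitBy.loop, List.map_reverse, List.prod_reverse, List.map_cons,
      List.prod_cons]
    have hh := head?_reverse_cons ag g hg
    cases ag
    · rw [bw2, hh, if_pos rfl, List.length_reverse, List.length_cons]
      push_cast; ring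
    · rw [bw2, hh, if_neg (by simp)]
      ring
  | cons b l ih =>
    intro ag g gs hg
    cases ag <;> cases b
    · -- ag = false, b = false : same block
      have h1 : ∀ x ∈ (false :: g), x = false :=
        fun x hx => (List.mem_cons.mp hx).elim id (hg x)
      rw [show List.splitBy.loop (· == ·) (false :: l) false g gs
          = List.splitBy.loop (· == ·) l false (false :: g) gs from rfl,
        ih false (false :: g) gs h1]
      simp only [bw2, List.length_cons]
    · -- ag = false, b = true : close block
      rw [show List.splitBy.loop (· == ·) (true :: l) false g gs
          = List.splitBy.loop (· == ·) l true [] ((false :: g).reverse :: gs) from rfl,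
        ih true [] _ (fun x hx => absurd hx List.not_mem_nil)]
      simp only [bw2, List.length_nil, Nat.zero_add]
      rw [List.map_cons, List.prod_cons, head?_reverse_cons false g hg,
        if_pos rfl, List.length_reverse, List.length_cons]
      push_cast
      ring
    · -- ag = true, b = false : close block
      rw [show List.splitBy.loop (· == ·) (false :: l) true g gs
          = List.splitBy.loop (· == ·) l false [] ((true :: g).reverse :: gs) from rfl,
        ih false [] _ (fun x hx => absurd hx List.not_mem_nil)]
      simp only [bw2, List.length_nil, Nat.zero_add]
      rw [List.map_cons, List.prod_cons, head?_reverse_cons true g hg,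
        if_neg (by simp)]
      ring
    · -- ag = true, b = true : same block
      have h1 : ∀ x ∈ (true :: g), x = true :=
        fun x hx => (List.mem_cons.mp hx).elim id (hg x)
      rw [show List.splitBy.loop (· == ·) (true :: l) true g gs
          = List.splitBy.loop (· == ·) l true (true :: g) gs from rfl,
        ih true (true :: g) gs h1]
      simp only [bw2, List.length_cons]

lemma blockWeight_cons (Δ : ℝ) (a : Bool) (l : List Bool) :
    blockWeight Δ (a :: l) = bw2 Δ a 1 l := by
  have := loop_spec Δ l a [] [] (by intro x hx; cases hx)
  simpa [blockWeight, List.splitBy] using this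

lemma bw2_true_indep (Δ : ℝ) (l : List Bool) : ∀ n n' : ℕ,
    bw2 Δ true n l = bw2 Δ true n' l := by
  induction l with
  | nil => intro n n'; rw [bw2, bw2]
  | cons b l ih =>
    intro n n'
    cases b
    · rw [bw2, bw2]
    · rw [bw2, bw2]; exact ih _ _

/-- Sum of the true-state weights over all sequences of length `m`. -/
noncomputable def TT (Δ : ℝ) (m : ℕ) : ℝ :=
  ∑ S : Fin m → Bool, bw2 Δ true 1 (List.ofFn S)

/-- Sum of the false-state weights over all sequences of length `m`. -/
noncomputable def VV (Δ : ℝ) (n m : ℕ) : ℝ :=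
  ∑ S : Fin m → Bool, bw2 Δ false n (List.ofFn S)

lemma sum_split (F : List Bool → ℝ) (m : ℕ) :
    (∑ S : Fin (m + 1) → Bool, F (List.ofFn S))
      = (∑ S : Fin m → Bool, F (false :: List.ofFn S))
        + ∑ S : Fin m → Bool, F (true :: List.ofFn S) := by
  rw [← Equiv.sum_comp (Fin.consEquiv (fun _ : Fin (m + 1) => Bool))
      (fun S => F (List.ofFn S))]
  rw [Fintype.sum_prod_type]
  rw [Fintype.sum_bool]
  have : ∀ (b : Bool) (S : Fin m → Bool),
      List.ofFn ((Fin.consEquiv (fun _ : Fin (m + 1) => Bool)) (b, S)) = b :: List.ofFn S := by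
    intro b S
    rw [List.ofFn_succ]
    simp [Fin.consEquiv]
  simp only [this]
  ring

lemma TT_zero (Δ : ℝ) : TT Δ 0 = 1 := by
  rw [TT]
  simp [bw2]

lemma VV_zero (Δ : ℝ) (n : ℕ) : VV Δ n 0 = 2 * Δ * n := by
  rw [VV]
  simp [bw2]

lemma TT_succ (Δ : ℝ) (m : ℕ) : TT Δ (m + 1) = TT Δ m + VV Δ 1 m := by
  rw [TT, sum_split]
  have h1 : ∀ S : Fin m → Bool,
      bw2 Δ true 1 (false :: List.ofFn S) = bw2 Δ false 1 (List.ofFn S) := by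
    intro S; rw [bw2]
  have h2 : ∀ S : Fin m → Bool,
      bw2 Δ true 1 (true :: List.ofFn S) = bw2 Δ true 1 (List.ofFn S) := by
    intro S; rw [bw2]; exact bw2_true_indep Δ _ 2 1
  simp only [h1, h2]
  rw [TT, VV]; ring

lemma VV_succ (Δ : ℝ) (n m : ℕ) :
    VV Δ n (m + 1) = VV Δ (n + 1) m + 2 * Δ * n * TT Δ m := by
  rw [VV, sum_split]
  have h1 : ∀ S : Fin m → Bool,
      bw2 Δ false n (false :: List.ofFn S) = bw2 Δ false (n + 1) (List.ofFn S) := by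
    intro S; rw [bw2]
  have h2 : ∀ S : Fin m → Bool,
      bw2 Δ false n (true :: List.ofFn S) = 2 * Δ * n * bw2 Δ true 1 (List.ofFn S) := by
    intro S; rw [bw2]
  simp only [h1, h2]
  rw [VV, TT, ← Finset.mul_sum]

lemma VV_unroll (Δ : ℝ) (m : ℕ) : ∀ n : ℕ,
    VV Δ n m = (∑ j ∈ Finset.range m, 2 * Δ * ((n : ℝ) + j) * TT Δ (m - 1 - j))
      + 2 * Δ * ((n : ℝ) + m) := by
  induction m with
  | zero => intro n; simp [VV_zero]
  | succ m ih =>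
    intro n
    rw [VV_succ, ih (n + 1)]
    rw [Finset.sum_range_succ']
    have e1 : ∀ j, (m + 1) - 1 - (j + 1) = m - 1 - j := by intro j; omega
    have e2 : (m + 1) - 1 - 0 = m := rfl
    simp only [e1, e2]
    have hcong : ∀ x ∈ Finset.range m,
        2 * Δ * ((((n + 1 : ℕ)) : ℝ) + (x : ℝ)) * TT Δ (m - 1 - x)
          = 2 * Δ * ((n : ℝ) + ((x + 1 : ℕ) : ℝ)) * TT Δ (m - 1 - x) :=
      fun x _ => by push_cast; ring
    rw [Finset.sum_congr rfl hcong]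
    push_cast
    ring

theorem blockWeight_sum_recurrence (Δ : ℝ) (hΔ : 0 < Δ) (m : ℕ) (hm : 5 ≤ m)
    (a : ℕ → ℝ)
    (ha : ∀ k : ℕ, a k = ∑ S : Fin k → Bool, blockWeight Δ (List.ofFn S)) :
    a m = a (m - 1) + 2 * Δ * (∑ j ∈ Finset.Icc 1 (m - 2), (j : ℝ) * a (m - 1 - j))
          + 2 * Δ * ((m : ℝ) - 1) + 2 * Δ * (m : ℝ) := by
  -- a (k+1) = TT Δ (k+1)
  have haT : ∀ k : ℕ, a (k + 1) = TT Δ (k + 1) := by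
    intro k
    rw [ha, sum_split, TT_succ]
    simp only [blockWeight_cons]
    rw [TT, VV]; ring
  obtain ⟨M, rfl⟩ : ∃ M, m = M + 2 := ⟨m - 2, by omega⟩
  have key : a (M + 2) = TT Δ (M + 1) + VV Δ 1 (M + 1) := by
    rw [haT (M + 1), TT_succ]
  rw [key, VV_unroll]
  -- simplify indices
  have hm1 : M + 2 - 1 = M + 1 := rfl
  have hm2 : M + 2 - 2 = M := rfl
  rw [hm1, hm2]
  have haT' : a (M + 1) = TT Δ (M + 1) := haT M
  -- rewrite the Icc sum as a range sum
  have hIcc : (∑ j ∈ Finset.Icc 1 M, (j : ℝ) * a (M + 1 - j))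
      = ∑ i ∈ Finset.range M, ((1 + i : ℕ) : ℝ) * a (M + 1 - (1 + i)) := by
    rw [← Finset.Ico_add_one_right_eq_Icc, Finset.sum_Ico_eq_sum_range]
    simp
  rw [hIcc]
  -- range (M+1) sum on LHS: peel last term j = M
  rw [Finset.sum_range_succ]
  have hT0 : TT Δ (M + 1 - 1 - M) = 1 := by
    have : M + 1 - 1 - M = 0 := by omega
    rw [this, TT_zero]
  rw [hT0]
  have hterm : ∀ j ∈ Finset.range M,
      2 * Δ * (((1 : ℕ) : ℝ) + j) * TT Δ (M + 1 - 1 - j)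
        = 2 * Δ * (((1 + j : ℕ) : ℝ) * a (M + 1 - (1 + j))) := by
    intro j hj
    have hj' : j < M := Finset.mem_range.mp hj
    have e : M + 1 - 1 - j = (M - 1 - j) + 1 := by omega
    have e2 : M + 1 - (1 + j) = (M - 1 - j) + 1 := by omega
    rw [e, e2, ← haT (M - 1 - j)]
    push_cast
    ring
  rw [Finset.sum_congr rfl hterm, haT']
  rw [Finset.mul_sum]
  push_cast
  ring
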